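/- The distinguishing number of the linearly ordered set (ℚ, <) is infinite: for every n ∈ ℕ and every coloring c : ℚ → Fin n there exists an order automorphism g of ℚ with g ≠ id and c(g(q)) = c(q) for all q ∈ ℚ. -/

import Mathlib

noncomputable section

namespace DistRatAux

open Order

variable {α : Type*} [LinearOrder α] {n : ℕ}

/-- Colored partial order isomorphisms: finite sets of pairs, order-compatible and
color-preserving. -/
def CPI (κ : α → Fin n) : Type _ :=
  { f : Finset (α × α) //
    (∀ p ∈ f, ∀ q ∈ f, cmp (Prod.fst p) (Prod.fst q) = cmp (Prod.snd p) (Prod.snd q)) ∧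
    ∀ p ∈ f, κ (Prod.fst p) = κ (Prod.snd p) }

instance (κ : α → Fin n) : Preorder (CPI κ) := Subtype.preorder _

/-- Every color that occurs, occurs densely and unboundedly in both directions. -/
def ColDense (κ : α → Fin n) : Prop :=
  (∀ z x y : α, x < y → ∃ u, x < u ∧ u < y ∧ κ u = κ z) ∧
  (∀ z x : α, ∃ u, u < x ∧ κ u = κ z) ∧
  (∀ z x : α, ∃ u, x < u ∧ κ u = κ z)

variable {κ : α → Fin n}

lemma exists_between_colored (H : ColDense κ) (z : α) (lo hi : Finset α)
    (hlh : ∀ x ∈ lo, ∀ y ∈ hi, x < y) :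
    ∃ m : α, κ m = κ z ∧ (∀ x ∈ lo, x < m) ∧ ∀ y ∈ hi, m < y := by
  obtain ⟨hd, hb, ha⟩ := H
  rcases lo.eq_empty_or_nonempty with rfl | nlo
  · rcases hi.eq_empty_or_nonempty with rfl | nhi
    · exact ⟨z, rfl, by simp, by simp⟩
    · obtain ⟨u, hu, hc⟩ := hb z (hi.min' nhi)
      exact ⟨u, hc, by simp, fun y hy => lt_of_lt_of_le hu (hi.min'_le y hy)⟩
  · rcases hi.eq_empty_or_nonempty with rfl | nhi
    · obtain ⟨u, hu, hc⟩ := ha z (lo.max' nlo)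
      exact ⟨u, hc, fun x hx => lt_of_le_of_lt (lo.le_max' x hx) hu, by simp⟩
    · obtain ⟨u, h1, h2, hc⟩ :=
        hd z (lo.max' nlo) (hi.min' nhi) (hlh _ (lo.max'_mem nlo) _ (hi.min'_mem nhi))
      exact ⟨u, hc, fun x hx => lt_of_le_of_lt (lo.le_max' x hx) h1,
        fun y hy => lt_of_lt_of_le h2 (hi.min'_le y hy)⟩

theorem cpi_exists_across (H : ColDense κ) (f : CPI κ) (a : α) :
    ∃ b : α, κ b = κ a ∧ ∀ p ∈ f.val, cmp (Prod.fst p) a = cmp (Prod.snd p) b := by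
  by_cases h : ∃ b, (a, b) ∈ f.val
  · obtain ⟨b, hb⟩ := h
    exact ⟨b, (f.prop.2 _ hb).symm, fun p hp => f.prop.1 _ hp _ hb⟩
  have key : ∀ x ∈ (f.val.filter fun p : α × α => p.1 < a).image Prod.snd,
      ∀ y ∈ (f.val.filter fun p : α × α => a < p.1).image Prod.snd, x < y := by
    intro x hx y hy
    rw [Finset.mem_image] at hx hy
    rcases hx with ⟨p, hp1, rfl⟩
    rcases hy with ⟨q, hq1, rfl⟩
    rw [Finset.mem_filter] at hp1 hq1
    rw [← lt_iff_lt_of_cmp_eq_cmp (f.prop.1 _ hp1.1 _ hq1.1)]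
    exact lt_trans hp1.2 hq1.2
  obtain ⟨b, hbc, hb1, hb2⟩ := exists_between_colored H a _ _ key
  refine ⟨b, hbc, ?_⟩
  rintro ⟨p1, p2⟩ hp
  have hne : p1 ≠ a := fun he => h ⟨p2, he ▸ hp⟩
  rcases lt_or_gt_of_ne hne with hl | hr
  · have h2 : p1 < a ∧ p2 < b :=
      ⟨hl, hb1 _ (Finset.mem_image.mpr ⟨(p1, p2), Finset.mem_filter.mpr ⟨hp, hl⟩, rfl⟩)⟩
    rw [← cmp_eq_lt_iff, ← cmp_eq_lt_iff] at h2
    exact h2.1.trans h2.2.symm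
  · have h2 : a < p1 ∧ b < p2 :=
      ⟨hr, hb2 _ (Finset.mem_image.mpr ⟨(p1, p2), Finset.mem_filter.mpr ⟨hp, hr⟩, rfl⟩)⟩
    rw [← cmp_eq_gt_iff, ← cmp_eq_gt_iff] at h2
    exact h2.1.trans h2.2.symm

/-- The cofinal set of colored partial isos defined at `a` on the left. -/
def cpiDefinedAtLeft (H : ColDense κ) (a : α) : Cofinal (CPI κ) where
  carrier := {f | ∃ b, (a, b) ∈ f.val}
  isCofinal f := by
    obtain ⟨b, hbc, a_b⟩ := cpi_exists_across H f a
    refine ⟨⟨insert (a, b) f.val, ⟨fun p hp q hq => ?_, fun p hp => ?_⟩⟩,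
      ⟨b, Finset.mem_insert_self _ _⟩, Finset.subset_insert _ _⟩
    · rw [Finset.mem_insert] at hp hq
      rcases hp with rfl | pf <;> rcases hq with rfl | qf
      · simp only [cmp_self_eq_eq]
      · rw [cmp_eq_cmp_symm]; exact a_b _ qf
      · exact a_b _ pf
      · exact f.prop.1 _ pf _ qf
    · rw [Finset.mem_insert] at hp
      rcases hp with rfl | pf
      · exact hbc.symm
      · exact f.prop.2 _ pf

/-- Swapping the two coordinates of a colored partial iso. -/
def CPI.comm (f : CPI κ) : CPI κ :=
  ⟨f.val.image Prod.swap, by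
    constructor
    · intro p hp q hq
      rw [Finset.mem_image] at hp hq
      obtain ⟨p', hp', rfl⟩ := hp
      obtain ⟨q', hq', rfl⟩ := hq
      exact (f.prop.1 _ hp' _ hq').symm
    · intro p hp
      rw [Finset.mem_image] at hp
      obtain ⟨p', hp', rfl⟩ := hp
      exact (f.prop.2 _ hp').symm⟩

/-- The cofinal set of colored partial isos defined at `b` on the right. -/
def cpiDefinedAtRight (H : ColDense κ) (b : α) : Cofinal (CPI κ) where
  carrier := {f | ∃ a, (a, b) ∈ f.val}
  isCofinal f := by
    obtain ⟨f', ⟨a, ha⟩, hl⟩ := (cpiDefinedAtLeft H b).isCofinal f.comm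
    have hl' : f.comm.val ⊆ f'.val := hl
    refine ⟨f'.comm, ⟨a, ?_⟩, ?_⟩
    · exact Finset.mem_image.mpr ⟨(b, a), ha, rfl⟩
    · intro p hp
      exact Finset.mem_image.mpr ⟨p.swap, hl' (Finset.mem_image.mpr ⟨p, hp, rfl⟩), p.swap_swap⟩

/-- Back-and-forth: a color-preserving order automorphism with a prescribed value. -/
lemma exists_colored_auto [Encodable α] (H : ColDense κ) (p q : α) (hpq : κ p = κ q) :
    ∃ e : α ≃o α, e p = q ∧ ∀ x, κ (e x) = κ x := by
  let dflt : CPI κ := ⟨{(p, q)}, by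
    constructor
    · intro p₁ hp₁ q₁ hq₁
      simp only [Finset.mem_singleton] at hp₁ hq₁
      subst hp₁; subst hq₁; simp
    · intro p₁ hp₁
      simp only [Finset.mem_singleton] at hp₁
      subst hp₁; exact hpq⟩
  let to_cofinal : α ⊕ α → Cofinal (CPI κ) := fun s =>
    Sum.recOn s (cpiDefinedAtLeft H) (cpiDefinedAtRight H)
  let I : Ideal (CPI κ) := idealOfCofinals dflt to_cofinal
  have F : ∀ a : α, {b // ∃ f ∈ I, (a, b) ∈ f.val} := fun a =>
    Classical.indefiniteDescription _ (by
      obtain ⟨f, ⟨b, hb⟩, hfI⟩ := cofinal_meets_idealOfCofinals dflt to_cofinal (Sum.inl a)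
      exact ⟨b, f, hfI, hb⟩)
  have G : ∀ b : α, {a // ∃ f ∈ I, (a, b) ∈ f.val} := fun b =>
    Classical.indefiniteDescription _ (by
      obtain ⟨f, ⟨a, ha⟩, hfI⟩ := cofinal_meets_idealOfCofinals dflt to_cofinal (Sum.inr b)
      exact ⟨a, f, hfI, ha⟩)
  let e : α ≃o α := OrderIso.ofCmpEqCmp (fun a => (F a).val) (fun b => (G b).val) (fun a b => by
    obtain ⟨f, hf, ha⟩ := (F a).prop
    obtain ⟨g, hg, hb⟩ := (G b).prop
    obtain ⟨m, _, fm, gm⟩ := I.directed _ hf _ hg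
    exact m.prop.1 (a, _) (fm ha) (_, b) (gm hb))
  refine ⟨e, ?_, ?_⟩
  · show (F p).val = q
    obtain ⟨f, hf, hp⟩ := (F p).prop
    obtain ⟨m, _, fm, gm⟩ := I.directed _ hf _ (mem_idealOfCofinals dflt to_cofinal)
    have hq : (p, q) ∈ m.val := gm (Finset.mem_singleton_self _)
    have h := m.prop.1 (p, (F p).val) (fm hp) (p, q) hq
    have h2 : cmp (F p).val q = Ordering.eq := by rw [← h, cmp_self_eq_eq]
    exact (cmp_eq_eq_iff _ _).mp h2
  · intro x
    show κ (F x).val = κ x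
    obtain ⟨f, _, hx⟩ := (F x).prop
    exact (f.prop.2 _ hx).symm

end DistRatAux

open DistRatAux

section Interval

variable {n : ℕ}

def IDense (c : ℚ → Fin n) (i : Fin n) (a b : ℚ) : Prop :=
  ∀ x y, a ≤ x → x < y → y ≤ b → ∃ u, x < u ∧ u < y ∧ c u = i

def IAbsent (c : ℚ → Fin n) (i : Fin n) (a b : ℚ) : Prop :=
  ∀ u, a < u → u < b → c u ≠ i

lemma exists_good_interval (c : ℚ → Fin n) (s : Finset (Fin n)) :
    ∃ a b : ℚ, a < b ∧ ∀ i ∈ s, IDense c i a b ∨ IAbsent c i a b := by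
  classical
  induction s using Finset.induction_on with
  | empty => exact ⟨0, 1, by norm_num, by simp⟩
  | @insert j s hj ih =>
    obtain ⟨a, b, hab, hs⟩ := ih
    by_cases hd : IDense c j a b
    · refine ⟨a, b, hab, fun i hi => ?_⟩
      rcases Finset.mem_insert.mp hi with rfl | his
      · exact Or.inl hd
      · exact hs i his
    · rw [IDense] at hd
      push_neg at hd
      obtain ⟨x, y, hax, hxy, hyb, habs⟩ := hd
      refine ⟨x, y, hxy, fun i hi => ?_⟩
      rcases Finset.mem_insert.mp hi with rfl | his
      · exact Or.inr fun u h1 h2 => habs u h1 h2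
      · rcases hs i his with h | h
        · exact Or.inl fun x' y' hx' hxy' hy' =>
            h x' y' (le_trans hax hx') hxy' (le_trans hy' hyb)
        · exact Or.inr fun u h1 h2 =>
            h u (lt_of_le_of_lt hax h1) (lt_of_lt_of_le h2 hyb)

end Interval

/-- The distinguishing number of `(ℚ, <)` is infinite: for every `n` and
every coloring `c : ℚ → Fin n` there is a nontrivial order automorphism of `ℚ`
preserving the colors. -/
theorem distinguishing_number_of_rationals_infinite
    (n : ℕ) (c : ℚ → Fin n) :
    ∃ g : ℚ ≃o ℚ, (∃ q, g q ≠ q) ∧ ∀ q, c (g q) = c q := by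
  classical
  obtain ⟨a, b, hab, hgood⟩ := exists_good_interval c Finset.univ
  set m : ℚ := (a + b) / 2 with hm
  have hma : a < m := by rw [hm]; linarith
  have hmb : m < b := by rw [hm]; linarith
  set S : Set ℚ := Set.Ioo a b with hS
  set κ : S → Fin n := fun z => c z.val with hκ
  have key : ∀ z : S, IDense c (c z.val) a b := by
    intro z
    rcases hgood (c z.val) (Finset.mem_univ _) with h | h
    · exact h
    · exact absurd rfl (h z.val z.2.1 z.2.2)
  have H : ColDense κ := by
    refine ⟨?_, ?_, ?_⟩
    · intro z x y hxy
      obtain ⟨u, h1, h2, h3⟩ := key z x.val y.val x.2.1.le hxy y.2.2.le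
      exact ⟨⟨u, x.2.1.trans h1, h2.trans y.2.2⟩, h1, h2, h3⟩
    · intro z x
      obtain ⟨u, h1, h2, h3⟩ := key z a x.val le_rfl x.2.1 x.2.2.le
      exact ⟨⟨u, h1, h2.trans x.2.2⟩, h2, h3⟩
    · intro z x
      obtain ⟨u, h1, h2, h3⟩ := key z x.val b x.2.1.le x.2.2 le_rfl
      exact ⟨⟨u, x.2.1.trans h1, h2⟩, h1, h3⟩
  obtain ⟨q0, hq1, hq2, hq3⟩ := key ⟨m, hma, hmb⟩ m b hma.le hmb le_rfl
  obtain ⟨enc⟩ := nonempty_encodable S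
  obtain ⟨e, hep, hecol⟩ := exists_colored_auto (κ := κ) H ⟨m, hma, hmb⟩
    ⟨q0, hma.trans hq1, hq2⟩ hq3.symm
  let g : ℚ → ℚ := fun x => if h : x ∈ S then (e ⟨x, h⟩ : ℚ) else x
  have hg_in : ∀ (x : ℚ) (h : x ∈ S), g x = (e ⟨x, h⟩ : ℚ) := fun x h => dif_pos h
  have hg_out : ∀ (x : ℚ), x ∉ S → g x = x := fun x h => dif_neg h
  have hmono : StrictMono g := by
    intro x y hxy
    by_cases hx : x ∈ S <;> by_cases hy : y ∈ S
    · rw [hg_in x hx, hg_in y hy]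
      exact_mod_cast e.strictMono (Subtype.mk_lt_mk.mpr hxy)
    · have hby : b ≤ y := by
        by_contra hby
        exact hy ⟨hx.1.trans hxy, lt_of_not_ge hby⟩
      rw [hg_in x hx, hg_out y hy]
      exact lt_of_lt_of_le (e ⟨x, hx⟩).2.2 hby
    · have hxa : x ≤ a := by
        by_contra hxa
        exact hx ⟨lt_of_not_ge hxa, hxy.trans hy.2⟩
      rw [hg_out x hx, hg_in y hy]
      exact lt_of_le_of_lt hxa (e ⟨y, hy⟩).2.1
    · rw [hg_out x hx, hg_out y hy]; exact hxy
  have hsurj : Function.Surjective g := by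
    intro y
    by_cases hy : y ∈ S
    · refine ⟨(e.symm ⟨y, hy⟩).val, ?_⟩
      rw [hg_in _ (e.symm ⟨y, hy⟩).2]
      have : (⟨(e.symm ⟨y, hy⟩).val, (e.symm ⟨y, hy⟩).2⟩ : S) = e.symm ⟨y, hy⟩ := rfl
      rw [this, OrderIso.apply_symm_apply]
    · exact ⟨y, hg_out y hy⟩
  refine ⟨StrictMono.orderIsoOfSurjective g hmono hsurj, ⟨m, ?_⟩, ?_⟩
  · rw [StrictMono.coe_orderIsoOfSurjective, hg_in m ⟨hma, hmb⟩]
    have : e ⟨m, hma, hmb⟩ = (⟨q0, hma.trans hq1, hq2⟩ : S) := hep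
    rw [this]
    exact ne_of_gt hq1
  · intro x
    rw [StrictMono.coe_orderIsoOfSurjective]
    by_cases hx : x ∈ S
    · rw [hg_in x hx]
      exact hecol ⟨x, hx⟩
    · rw [hg_out x hx]
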